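/- On ℂ³ with coordinates (z₁, z₂, z₃), let f(z) = Re(z₂z₃/z₁) and let ∇f be its gradient with respect to the standard flat Kähler metric (defined where z₁ ≠ 0). Then the function φ₁(z) = |z₂|² − |z₃|² is invariant along the flow of ∇f, i.e., ∇f(φ₁) = 0. -/

import Mathlib

/-- On ℂ³ with `f(z) = Re(z₂z₃/z₁)`, the gradient vector field of `f`
with respect to the standard flat Kähler metric (defined where `z₁ ≠ 0`), whose
complex components are `(−z̄₂z̄₃, z̄₁z̄₃, z̄₁z̄₂)/z̄₁²`, annihilates the function
`φ₁(z) = |z₂|² − |z₃|²`, i.e. `∇f(φ₁) = 0`. -/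
theorem stmt_4 (z : Fin 3 → ℂ) (hz : z 0 ≠ 0) :
    fderiv ℝ (fun w : Fin 3 → ℂ => Complex.normSq (w 1) - Complex.normSq (w 2)) z
      ![-((starRingEnd ℂ) (z 1) * (starRingEnd ℂ) (z 2)) / ((starRingEnd ℂ) (z 0)) ^ 2,
        ((starRingEnd ℂ) (z 0) * (starRingEnd ℂ) (z 2)) / ((starRingEnd ℂ) (z 0)) ^ 2,
        ((starRingEnd ℂ) (z 0) * (starRingEnd ℂ) (z 1)) / ((starRingEnd ℂ) (z 0)) ^ 2] = 0 := by
  have hfun : (fun w : Fin 3 → ℂ => Complex.normSq (w 1) - Complex.normSq (w 2))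
      = fun w : Fin 3 → ℂ => ‖w 1‖ ^ 2 - ‖w 2‖ ^ 2 := by
    funext w
    simp [Complex.sq_norm]
  have h1 : HasFDerivAt (fun w : Fin 3 → ℂ => ‖w 1‖ ^ 2)
      ((2 • innerSL ℝ (z 1)).comp (ContinuousLinearMap.proj 1)) z :=
    (ContinuousLinearMap.proj (R := ℝ) (φ := fun _ : Fin 3 => ℂ) 1).hasFDerivAt.norm_sq
  have h2 : HasFDerivAt (fun w : Fin 3 → ℂ => ‖w 2‖ ^ 2)
      ((2 • innerSL ℝ (z 2)).comp (ContinuousLinearMap.proj 2)) z :=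
    (ContinuousLinearMap.proj (R := ℝ) (φ := fun _ : Fin 3 => ℂ) 2).hasFDerivAt.norm_sq
  rw [hfun, HasFDerivAt.fderiv (f := fun w : Fin 3 → ℂ => ‖w 1‖ ^ 2 - ‖w 2‖ ^ 2) (h1.sub h2)]
  have hz0 : (starRingEnd ℂ) (z 0) ≠ 0 := by simpa using hz
  simp only [ContinuousLinearMap.sub_apply, ContinuousLinearMap.comp_apply,
    ContinuousLinearMap.smul_apply, ContinuousLinearMap.proj_apply, innerSL_apply_apply, Complex.inner,
    Matrix.cons_val_one, Matrix.head_cons, Matrix.cons_val_two, Matrix.tail_cons, Matrix.cons_val_zero]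
  have key : (starRingEnd ℂ) (z 1) * ((starRingEnd ℂ) (z 0) * (starRingEnd ℂ) (z 2) /
        ((starRingEnd ℂ) (z 0)) ^ 2)
      = (starRingEnd ℂ) (z 2) * ((starRingEnd ℂ) (z 0) * (starRingEnd ℂ) (z 1) /
        ((starRingEnd ℂ) (z 0)) ^ 2) := by
    field_simp
  rw [mul_comm ((starRingEnd ℂ) (z 0) * (starRingEnd ℂ) (z 2) / (starRingEnd ℂ) (z 0) ^ 2)
    ((starRingEnd ℂ) (z 1)), key, mul_comm ((starRingEnd ℂ) (z 2))]
  simp
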